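/- arXiv:math/0311045 — 2 statements merged into one kernel-verified Lean document; each statement's English description precedes it below -/
import Mathlib

section
/- Let G = (V,E) be a finite acyclic digraph and μ an ε-admissible probability measure on {0,1}^V, with η = 1 − ε. Let μ̃ be the pushforward of μ under the coordinatewise bit-flip ω ↦ (1 − ω(i))_{i∈V}. Then μ̃ stochastically dominates the product Bernoulli measure π_η^V; equivalently, μ is stochastically dominated by π_ε^V. -/
open Finset

open Classical in
/-- Probability of the event `P` under the (finitely supported) measure `μ`. -/
noncomputable def Pr {Ω : Type*} [Fintype Ω] (μ : Ω → ℝ) (P : Ω → Prop) : ℝ :=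
  ∑ ω : Ω, if P ω then μ ω else 0

/-- `μ` is ε-admissible for the digraph with edge relation `E` on `V`. -/
def IsAdmissible {V : Type*} [Fintype V] [DecidableEq V] (E : V → V → Prop) (ε : ℝ)
    (μ : (V → Bool) → ℝ) : Prop :=
  ∀ i : V, ∀ Y Y' : Finset V, Disjoint Y Y' →
    (∀ j ∈ Y, ¬ Relation.ReflTransGen E i j) →
    (∀ j ∈ Y', ¬ Relation.ReflTransGen E i j) →
    0 < Pr μ (fun ω => (∀ j ∈ Y, ω j = true) ∧ (∀ j ∈ Y', ω j = false)) →
    Pr μ (fun ω => ω i = true ∧ (∀ j ∈ Y, ω j = true) ∧ (∀ j ∈ Y', ω j = false)) ≤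
      ε * Pr μ (fun ω => (∀ j ∈ Y, ω j = true) ∧ (∀ j ∈ Y', ω j = false))

/-- The product Bernoulli measure `π_p` on `{0,1}^V`. -/
noncomputable def bernoulliProd {V : Type*} [Fintype V] (p : ℝ) (ω : V → Bool) : ℝ :=
  ∏ i : V, if ω i then p else 1 - p

section Aux

open Classical

variable {V : Type*} [Fintype V] [DecidableEq V]

lemma Pr_congr {μ : (V → Bool) → ℝ} {P Q : (V → Bool) → Prop}
    (h : ∀ ω, P ω ↔ Q ω) : Pr μ P = Pr μ Q := by
  unfold Pr
  exact Finset.sum_congr rfl fun ω _ => if_congr (h ω) rfl rfl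

lemma Pr_nonneg {μ : (V → Bool) → ℝ} (hpos : ∀ ω, 0 ≤ μ ω) (P : (V → Bool) → Prop) :
    0 ≤ Pr μ P := by
  unfold Pr
  exact Finset.sum_nonneg fun ω _ => by split <;> simp [hpos ω]

/-- The partial measure: coordinates in `S` are independent Bernoulli(ε), the rest keep
the marginal of `μ`. -/
noncomputable def nuMix (ε : ℝ) (μ : (V → Bool) → ℝ) (S : Finset V) (ω : V → Bool) : ℝ :=
  (∏ j ∈ S, if ω j then ε else 1 - ε) * Pr μ (fun τ => ∀ j ∉ S, τ j = ω j)

lemma sum_pair (i : V) (g : (V → Bool) → ℝ) :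
    ∑ ω, g ω = ∑ ω ∈ univ.filter (fun ω => ω i = false),
      (g ω + g (Function.update ω i true)) := by
  rw [Finset.sum_add_distrib,
    ← Finset.sum_filter_add_sum_filter_not univ (fun ω => ω i = false) g]
  congr 1
  refine Finset.sum_nbij' (fun ω => Function.update ω i false)
    (fun ω => Function.update ω i true) ?_ ?_ ?_ ?_ ?_
  · intro ω hω
    simp [Function.update_self]
  · intro ω hω
    simp [Function.update_self]
  · intro ω hω
    simp only [mem_filter, mem_univ, true_and] at hω
    have hω' : ω i = true := by simpa using hω
    funext j
    by_cases hj : j = i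
    · subst hj; simp [Function.update_self, hω']
    · simp [Function.update_of_ne hj]
  · intro ω hω
    simp only [mem_filter, mem_univ, true_and] at hω
    funext j
    by_cases hj : j = i
    · subst hj; simp [Function.update_self, hω]
    · simp [Function.update_of_ne hj]
  · intro ω hω
    simp only [mem_filter, mem_univ, true_and] at hω
    have hω' : ω i = true := by simpa using hω
    congr 1
    funext j
    by_cases hj : j = i
    · subst hj; simp [Function.update_self, hω']
    · simp [Function.update_of_ne hj]

lemma nuMix_step (E : V → V → Prop) {ε : ℝ} (hε0 : 0 ≤ ε) (hε1 : ε ≤ 1)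
    {μ : (V → Bool) → ℝ} (hpos : ∀ ω, 0 ≤ μ ω) (hadm : IsAdmissible E ε μ)
    (S : Finset V) (i : V) (hi : i ∉ S)
    (hdesc : ∀ j, Relation.TransGen E i j → j ∈ S)
    (f : (V → Bool) → ℝ) (hf : Monotone f) :
    ∑ ω, nuMix ε μ S ω * f ω ≤ ∑ ω, nuMix ε μ (insert i S) ω * f ω := by
  rw [sum_pair i (fun ω => nuMix ε μ S ω * f ω),
    sum_pair i (fun ω => nuMix ε μ (insert i S) ω * f ω)]
  apply Finset.sum_le_sum
  intro ω hω
  have hωi : ω i = false := by simpa using hω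
  set ωt := Function.update ω i true with hωtdef
  have hωti : ωt i = true := Function.update_self i true ω
  have hωtj : ∀ j, j ≠ i → ωt j = ω j := fun j hj => Function.update_of_ne hj true ω
  -- key predicate equivalences
  have hQA : ∀ τ : V → Bool, (∀ j ∉ S, τ j = ωt j) ↔
      (τ i = true ∧ ∀ j ∉ insert i S, τ j = ω j) := by
    intro τ
    constructor
    · intro h
      refine ⟨(h i hi).trans hωti, fun j hj => ?_⟩
      have hjS : j ∉ S := fun h' => hj (mem_insert_of_mem h')
      have hji : j ≠ i := fun h' => hj (h' ▸ mem_insert_self i S)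
      rw [h j hjS, hωtj j hji]
    · rintro ⟨h1, h2⟩ j hjS
      by_cases hji : j = i
      · subst hji; rw [h1, hωti]
      · rw [hωtj j hji]; exact h2 j (by simp [hjS, hji])
  have hQB : ∀ τ : V → Bool, (∀ j ∉ S, τ j = ω j) ↔
      (τ i = false ∧ ∀ j ∉ insert i S, τ j = ω j) := by
    intro τ
    constructor
    · intro h
      refine ⟨(h i hi).trans hωi, fun j hj => ?_⟩
      exact h j (fun h' => hj (mem_insert_of_mem h'))
    · rintro ⟨h1, h2⟩ j hjS
      by_cases hji : j = i
      · subst hji; rw [h1, hωi]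
      · exact h2 j (by simp [hjS, hji])
  set A := Pr μ (fun τ => ∀ j ∉ S, τ j = ωt j) with hAdef
  set B := Pr μ (fun τ => ∀ j ∉ S, τ j = ω j) with hBdef
  have hA0 : 0 ≤ A := Pr_nonneg hpos _
  have hB0 : 0 ≤ B := Pr_nonneg hpos _
  have hC : Pr μ (fun τ => ∀ j ∉ insert i S, τ j = ω j) = A + B := by
    rw [hAdef, hBdef, Pr_congr hQA, Pr_congr hQB]
    unfold Pr
    rw [← Finset.sum_add_distrib]
    refine Finset.sum_congr rfl fun τ _ => ?_
    by_cases hτ : τ i = true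
    · have hτ' : ¬ τ i = false := by simp [hτ]
      simp [hτ, hτ']
    · have hτ' : τ i = false := by simpa using hτ
      simp [hτ, hτ']
  have hCt : Pr μ (fun τ => ∀ j ∉ insert i S, τ j = ωt j) = A + B := by
    rw [← hC]
    refine Pr_congr fun τ => forall_congr' fun j => ?_
    by_cases hj : j ∈ insert i S
    · simp [hj]
    · have hji : j ≠ i := fun h' => hj (h' ▸ mem_insert_self i S)
      rw [hωtj j hji]
  -- admissibility bound: A ≤ ε * (A + B)
  have hA : A ≤ ε * (A + B) := by
    by_cases hCpos : 0 < A + B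
    · set Y := univ.filter (fun j => j ∉ S ∧ j ≠ i ∧ ω j = true) with hYdef
      set Y' := univ.filter (fun j => j ∉ S ∧ j ≠ i ∧ ω j = false) with hY'def
      have hcond : ∀ τ : V → Bool,
          ((∀ j ∈ Y, τ j = true) ∧ (∀ j ∈ Y', τ j = false)) ↔
          (∀ j ∉ insert i S, τ j = ω j) := by
        intro τ
        constructor
        · rintro ⟨h1, h2⟩ j hj
          have hjS : j ∉ S := fun h' => hj (mem_insert_of_mem h')
          have hji : j ≠ i := fun h' => hj (h' ▸ mem_insert_self i S)
          cases hb : ω j with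
          | true => exact h1 j (by simp [hYdef, hjS, hji, hb])
          | false => exact h2 j (by simp [hY'def, hjS, hji, hb])
        · intro h
          constructor
          · intro j hj
            simp only [hYdef, mem_filter, mem_univ, true_and] at hj
            rw [h j (by simp [hj.1, hj.2.1]), hj.2.2]
          · intro j hj
            simp only [hY'def, mem_filter, mem_univ, true_and] at hj
            rw [h j (by simp [hj.1, hj.2.1]), hj.2.2]
      have hdisj : Disjoint Y Y' := by
        rw [Finset.disjoint_left]
        intro a ha ha'
        simp only [hYdef, hY'def, mem_filter, mem_univ, true_and] at ha ha'
        rw [ha.2.2] at ha'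
        exact Bool.noConfusion ha'.2.2
      have hYr : ∀ j ∈ Y, ¬ Relation.ReflTransGen E i j := by
        intro j hj hr
        simp only [hYdef, mem_filter, mem_univ, true_and] at hj
        rcases Relation.reflTransGen_iff_eq_or_transGen.mp hr with h | h
        · exact hj.2.1 h
        · exact hj.1 (hdesc j h)
      have hY'r : ∀ j ∈ Y', ¬ Relation.ReflTransGen E i j := by
        intro j hj hr
        simp only [hY'def, mem_filter, mem_univ, true_and] at hj
        rcases Relation.reflTransGen_iff_eq_or_transGen.mp hr with h | h
        · exact hj.2.1 h
        · exact hj.1 (hdesc j h)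
      have hcondC : Pr μ (fun τ => (∀ j ∈ Y, τ j = true) ∧ (∀ j ∈ Y', τ j = false)) = A + B := by
        rw [Pr_congr hcond, hC]
      have hcondA : Pr μ (fun τ => τ i = true ∧
          (∀ j ∈ Y, τ j = true) ∧ (∀ j ∈ Y', τ j = false)) = A := by
        rw [hAdef, Pr_congr hQA]
        exact Pr_congr fun τ => and_congr Iff.rfl (hcond τ).symm |>.symm
      have key := hadm i Y Y' hdisj hYr hY'r (by rw [hcondC]; exact hCpos)
      rw [hcondA, hcondC] at key
      exact key
    · have h1 : A + B ≤ 0 := le_of_not_gt hCpos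
      have h2 : A + B = 0 := le_antisymm h1 (by linarith)
      have : A ≤ 0 := by linarith
      rw [h2]
      linarith
  -- monotonicity
  have hfle : f ω ≤ f ωt := by
    apply hf
    intro j
    by_cases hj : j = i
    · subst hj; rw [hωi, hωti]; exact Bool.false_le _
    · rw [hωtj j hj]
  -- products
  set P := ∏ j ∈ S, (if ω j then ε else (1:ℝ) - ε) with hPdef
  have hP0 : 0 ≤ P := Finset.prod_nonneg fun j _ => by split <;> linarith
  have hPt : (∏ j ∈ S, if ωt j then ε else (1:ℝ) - ε) = P := by
    refine Finset.prod_congr rfl fun j hj => ?_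
    rw [hωtj j (fun h => hi (h ▸ hj))]
  have e1 : nuMix ε μ S ω = P * B := rfl
  have e2 : nuMix ε μ S ωt = P * A := by
    unfold nuMix
    rw [hPt, hAdef]
  have e3 : nuMix ε μ (insert i S) ω = (1 - ε) * P * (A + B) := by
    unfold nuMix
    rw [Finset.prod_insert hi, hωi, hC]
    ring_nf
    simp [hPdef]
    ring
  have e4 : nuMix ε μ (insert i S) ωt = ε * P * (A + B) := by
    unfold nuMix
    rw [Finset.prod_insert hi, hωti, hPt, hCt]
    simp
  rw [e1, e2, e3, e4]
  have key : 0 ≤ P * ((ε * (A + B) - A) * (f ωt - f ω)) :=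
    mul_nonneg hP0 (mul_nonneg (by linarith) (by linarith))
  have expand : (1 - ε) * P * (A + B) * f ω + ε * P * (A + B) * f ωt -
      (P * B * f ω + P * A * f ωt) = P * ((ε * (A + B) - A) * (f ωt - f ω)) := by ring
  linarith

lemma nuMix_chain (E : V → V → Prop) (hacyclic : ∀ i : V, ¬ Relation.TransGen E i i)
    {ε : ℝ} (hε0 : 0 ≤ ε) (hε1 : ε ≤ 1)
    {μ : (V → Bool) → ℝ} (hpos : ∀ ω, 0 ≤ μ ω) (hadm : IsAdmissible E ε μ) :
    ∀ n : ℕ, ∀ S : Finset V, S.card = n →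
      (∀ a ∈ S, ∀ b, Relation.TransGen E a b → b ∈ S) →
      ∀ f : (V → Bool) → ℝ, Monotone f →
        ∑ ω, μ ω * f ω ≤ ∑ ω, nuMix ε μ S ω * f ω := by
  intro n
  induction n with
  | zero =>
    intro S hcard _ f hf
    have hS : S = ∅ := Finset.card_eq_zero.mp hcard
    subst hS
    refine le_of_eq (Finset.sum_congr rfl fun ω _ => ?_)
    congr 1
    unfold nuMix
    rw [Finset.prod_empty, one_mul]
    have h : ∀ τ : V → Bool, (∀ j ∉ (∅ : Finset V), τ j = ω j) ↔ τ = ω := by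
      intro τ
      simp [funext_iff]
    rw [Pr_congr h]
    unfold Pr
    beta_reduce
    exact ((@if_pos (ω = ω) (Classical.propDecidable _) rfl _ (μ ω) 0).symm.trans
      (Finset.sum_eq_single ω
        (fun b _ hb => @if_neg (b = ω) (Classical.propDecidable _) hb _ (μ b) 0)
        (fun h => absurd (Finset.mem_univ ω) h)).symm)
  | succ n ih =>
    intro S hcard hclosed f hf
    have hne : S.Nonempty := by
      rw [← Finset.card_pos, hcard]; omega
    haveI : IsTrans V (Relation.TransGen E) := ⟨fun _ _ _ => Relation.TransGen.trans⟩
    haveI : IsIrrefl V (Relation.TransGen E) := ⟨hacyclic⟩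
    have wf : WellFounded (Relation.TransGen E) := Finite.wellFounded_of_trans_of_irrefl _
    have hSne : {x | x ∈ S}.Nonempty := ⟨hne.choose, hne.choose_spec⟩
    set i := wf.min {x | x ∈ S} hSne with hidef
    have hiS : i ∈ S := wf.min_mem _ hSne
    have hmin : ∀ x ∈ S, ¬ Relation.TransGen E x i := fun x hx => wf.not_lt_min _ hx
    have herase_closed : ∀ a ∈ S.erase i, ∀ b, Relation.TransGen E a b → b ∈ S.erase i := by
      intro a ha b hab
      have haS := Finset.mem_of_mem_erase ha
      refine Finset.mem_erase.mpr ⟨?_, hclosed a haS b hab⟩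
      rintro rfl
      exact hmin a haS hab
    have hdesc : ∀ j, Relation.TransGen E i j → j ∈ S.erase i := by
      intro j hj
      refine Finset.mem_erase.mpr ⟨?_, hclosed i hiS j hj⟩
      rintro rfl
      exact hacyclic i hj
    have hcard' : (S.erase i).card = n := by
      rw [Finset.card_erase_of_mem hiS, hcard]
      omega
    calc ∑ ω, μ ω * f ω ≤ ∑ ω, nuMix ε μ (S.erase i) ω * f ω :=
          ih (S.erase i) hcard' herase_closed f hf
      _ ≤ ∑ ω, nuMix ε μ (insert i (S.erase i)) ω * f ω :=
          nuMix_step E hε0 hε1 hpos hadm (S.erase i) i (Finset.notMem_erase i S)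
            (fun j hj => hdesc j hj) f hf
      _ = ∑ ω, nuMix ε μ S ω * f ω := by rw [Finset.insert_erase hiS]

end Aux

/-- If `μ` is ε-admissible for a finite acyclic digraph and `η = 1 − ε`, then the
bit-flipped measure `μ̃` stochastically dominates `π_η`; equivalently, `μ` is
stochastically dominated by `π_ε`. -/
theorem admissible_stochDom {V : Type*} [Fintype V] [DecidableEq V]
    (E : V → V → Prop) (hacyclic : ∀ i : V, ¬ Relation.TransGen E i i)
    (ε η : ℝ) (hη : η = 1 - ε) (hε0 : 0 ≤ ε) (hε1 : ε ≤ 1)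
    (μ : (V → Bool) → ℝ) (hpos : ∀ ω, 0 ≤ μ ω) (hsum : ∑ ω, μ ω = 1)
    (hadm : IsAdmissible E ε μ) :
    (∀ f : (V → Bool) → ℝ, Monotone f →
      ∑ ω, bernoulliProd η ω * f ω ≤ ∑ ω, μ (fun i => !ω i) * f ω) ∧
    (∀ f : (V → Bool) → ℝ, Monotone f →
      ∑ ω, μ ω * f ω ≤ ∑ ω, bernoulliProd ε ω * f ω) := by
  have part2 : ∀ f : (V → Bool) → ℝ, Monotone f →
      ∑ ω, μ ω * f ω ≤ ∑ ω, bernoulliProd ε ω * f ω := by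
    intro f hf
    have hchain := nuMix_chain E hacyclic hε0 hε1 hpos hadm (Finset.univ.card)
      Finset.univ rfl (fun a _ b _ => Finset.mem_univ b) f hf
    have huniv : ∀ ω : V → Bool, nuMix ε μ Finset.univ ω = bernoulliProd ε ω := by
      intro ω
      unfold nuMix Pr bernoulliProd
      simp [hsum]
    calc ∑ ω, μ ω * f ω ≤ ∑ ω, nuMix ε μ Finset.univ ω * f ω := hchain
      _ = ∑ ω, bernoulliProd ε ω * f ω :=
          Finset.sum_congr rfl fun ω _ => by rw [huniv ω]
  refine ⟨?_, part2⟩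
  intro f hf
  have hg : Monotone (fun ω : V → Bool => -f (fun i => !ω i)) := by
    intro a b hab
    simp only [neg_le_neg_iff]
    apply hf
    intro j
    have := hab j
    cases ha : a j <;> cases hb : b j <;> simp_all
  have h3 : ∑ ω, bernoulliProd ε ω * f (fun i => !ω i) ≤
      ∑ ω, μ ω * f (fun i => !ω i) := by
    have h2 := part2 (fun ω => -f (fun i => !ω i)) hg
    simp only [mul_neg, Finset.sum_neg_distrib] at h2
    linarith
  have hflip : ∀ g : (V → Bool) → ℝ, ∑ ω, g ω = ∑ ω : V → Bool, g (fun i => !ω i) := by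
    intro g
    refine Fintype.sum_equiv (Function.Involutive.toPerm (fun ω i => !ω i)
      (show Function.Involutive (fun ω : V → Bool => fun i => !ω i) from fun ω => by funext i; simp)) _ _ (fun ω => ?_)
    simp [Function.Involutive.coe_toPerm]
  have hb : ∀ ω : V → Bool, bernoulliProd η (fun i => !ω i) = bernoulliProd ε ω := by
    intro ω
    unfold bernoulliProd
    refine Finset.prod_congr rfl fun j _ => ?_
    cases h : ω j <;> simp [h, hη]
  calc ∑ ω, bernoulliProd η ω * f ω
      = ∑ ω, bernoulliProd ε ω * f (fun i => !ω i) := by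
        rw [hflip (fun ω => bernoulliProd η ω * f ω)]
        exact Finset.sum_congr rfl fun ω _ => by rw [hb ω]
    _ ≤ ∑ ω, μ ω * f (fun i => !ω i) := h3
    _ = ∑ ω, μ (fun i => !ω i) * f ω := by
        rw [hflip (fun ω => μ (fun i => !ω i) * f ω)]
        refine Finset.sum_congr rfl fun ω _ => ?_
        have hdn : (fun i => !(!ω i)) = ω := funext fun i => Bool.not_not _
        rw [hdn]
end

section
/- Let G = (V,E) be a finite acyclic digraph in which every vertex has out-degree at most Δ ≥ 1, and let μ ∈ W_η^G with ε := 1−η ≤ Δ^Δ/(Δ+1)^{Δ+1}. Then μ stochastically dominates the product Bernoulli measure π_ρ^V, where ρ = (1 − ε^{1/(Δ+1)}/Δ^{Δ/(Δ+1)}) · (1 − (εΔ)^{1/(Δ+1)}). -/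
open Finset

/-- `μ ∈ W_η^G`: for every `i` and all disjoint `Y, Y' ⊆ V \ N̄(i)` (with `N̄(i)`
the closed out-neighborhood of `i`) such that the conditioning event has positive
probability, `P(X_i = 1 | ⋀_{j∈Y}(X_j=1) ∧ ⋀_{j∈Y'}(X_j=0)) ≥ η`. -/
def MemW {V : Type*} [Fintype V] [DecidableEq V] (E : V → V → Prop) (η : ℝ)
    (μ : (V → Bool) → ℝ) : Prop :=
  ∀ i : V, ∀ Y Y' : Finset V, Disjoint Y Y' →
    (∀ j ∈ Y, j ≠ i ∧ ¬ E i j) → (∀ j ∈ Y', j ≠ i ∧ ¬ E i j) →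
    0 < Pr μ (fun ω => (∀ j ∈ Y, ω j = true) ∧ (∀ j ∈ Y', ω j = false)) →
    η * Pr μ (fun ω => (∀ j ∈ Y, ω j = true) ∧ (∀ j ∈ Y', ω j = false)) ≤
      Pr μ (fun ω => ω i = true ∧ (∀ j ∈ Y, ω j = true) ∧ (∀ j ∈ Y', ω j = false))

section Aux
variable {V : Type*} [Fintype V] [DecidableEq V]

lemma Pr_le_one (μ : (V → Bool) → ℝ) (hpos : ∀ ω, 0 ≤ μ ω) (hsum : ∑ ω, μ ω = 1)
    (P : (V → Bool) → Prop) : Pr μ P ≤ 1 := by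
  rw [← hsum]
  unfold Pr
  refine Finset.sum_le_sum fun ω _ => ?_
  split_ifs
  · exact le_rfl
  · exact hpos ω

omit [Fintype V] in
lemma cond_erase (S : Finset V) (i : V) (hi : i ∈ S) (σ ω : V → Bool) (b : Bool) :
    (∀ j ∉ S.erase i, ω j = Function.update σ i b j) ↔
      (ω i = b ∧ ∀ j ∉ S, ω j = σ j) := by
  constructor
  · intro h
    refine ⟨?_, ?_⟩
    · have := h i (Finset.notMem_erase i S)
      rwa [Function.update_self] at this
    · intro j hj
      have hji : j ≠ i := fun e => hj (e ▸ hi)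
      have := h j (fun hm => hj (Finset.mem_of_mem_erase hm))
      rwa [Function.update_of_ne hji] at this
  · rintro ⟨hb, h⟩ j hj
    rcases eq_or_ne j i with rfl | hji
    · rwa [Function.update_self]
    · rw [Function.update_of_ne hji]
      exact h j (fun hjS => hj (Finset.mem_erase.2 ⟨hji, hjS⟩))

open Classical in
lemma split_sum (S : Finset V) (i : V) (hi : i ∈ S) (σ : V → Bool)
    (g : (V → Bool) → ℝ) :
    (∑ ω, if ∀ j ∉ S, ω j = σ j then g ω else 0)
      = (∑ ω, if ∀ j ∉ S.erase i, ω j = Function.update σ i true j then g ω else 0)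
      + (∑ ω, if ∀ j ∉ S.erase i, ω j = Function.update σ i false j then g ω else 0) := by
  rw [← Finset.sum_add_distrib]
  refine Finset.sum_congr rfl fun ω _ => ?_
  rw [if_congr (cond_erase S i hi σ ω true) rfl rfl,
      if_congr (cond_erase S i hi σ ω false) rfl rfl]
  by_cases hP : ∀ j ∉ S, ω j = σ j
  · rcases Bool.eq_false_or_eq_true (ω i) with hb | hb
    · rw [if_pos hP, hb,
        if_pos (show (true = true) ∧ ∀ j ∉ S, ω j = σ j from ⟨rfl, hP⟩),
        if_neg (show ¬((true = false) ∧ ∀ j ∉ S, ω j = σ j) from fun h => Bool.noConfusion h.1),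
        add_zero]
    · rw [if_pos hP, hb,
        if_neg (show ¬((false = true) ∧ ∀ j ∉ S, ω j = σ j) from fun h => Bool.noConfusion h.1),
        if_pos (show (false = false) ∧ ∀ j ∉ S, ω j = σ j from ⟨rfl, hP⟩), zero_add]
  · rw [if_neg hP, if_neg (fun h => hP h.2), if_neg (fun h => hP h.2), add_zero]

open Classical in
lemma split_sumF (S : Finset V) (i : V) (hi : i ∈ S) (σ : V → Bool)
    (p : ℝ) (f : (V → Bool) → ℝ) :
    (∑ ω, if ∀ j ∉ S, ω j = σ j then (∏ j ∈ S, if ω j then p else 1 - p) * f ω else 0)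
      = p * (∑ ω, if ∀ j ∉ S.erase i, ω j = Function.update σ i true j then
              (∏ j ∈ S.erase i, if ω j then p else 1 - p) * f ω else 0)
        + (1 - p) * (∑ ω, if ∀ j ∉ S.erase i, ω j = Function.update σ i false j then
              (∏ j ∈ S.erase i, if ω j then p else 1 - p) * f ω else 0) := by
  rw [Finset.mul_sum, Finset.mul_sum, ← Finset.sum_add_distrib]
  refine Finset.sum_congr rfl fun ω _ => ?_
  rw [if_congr (cond_erase S i hi σ ω true) rfl rfl,
      if_congr (cond_erase S i hi σ ω false) rfl rfl,
      ← Finset.mul_prod_erase S (fun j => if ω j then p else 1 - p) hi]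
  by_cases hP : ∀ j ∉ S, ω j = σ j
  · rcases Bool.eq_false_or_eq_true (ω i) with hb | hb
    · rw [if_pos hP, hb,
        if_pos (show (true = true) ∧ ∀ j ∉ S, ω j = σ j from ⟨rfl, hP⟩),
        if_neg (show ¬((true = false) ∧ ∀ j ∉ S, ω j = σ j) from fun h => Bool.noConfusion h.1),
        if_pos (show (true : Bool) = true from rfl)]
      ring
    · rw [if_pos hP, hb,
        if_neg (show ¬((false = true) ∧ ∀ j ∉ S, ω j = σ j) from fun h => Bool.noConfusion h.1),
        if_pos (show (false = false) ∧ ∀ j ∉ S, ω j = σ j from ⟨rfl, hP⟩),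
        if_neg (show ¬((false : Bool) = true) from fun h => Bool.noConfusion h)]
      ring
  · rw [if_neg hP, if_neg (fun h => hP h.2), if_neg (fun h => hP h.2)]
    ring

open Classical in
lemma F_mono (S' : Finset V) (i : V) (hi : i ∉ S') (σ : V → Bool)
    (p : ℝ) (hp0 : 0 ≤ p) (hp1 : p ≤ 1) (f : (V → Bool) → ℝ) (hf : Monotone f) :
    (∑ ω, if ∀ j ∉ S', ω j = Function.update σ i false j then
        (∏ j ∈ S', if ω j then p else 1 - p) * f ω else 0)
      ≤ (∑ ω, if ∀ j ∉ S', ω j = Function.update σ i true j then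
        (∏ j ∈ S', if ω j then p else 1 - p) * f ω else 0) := by
  have hinv : Function.Involutive (fun ω : V → Bool => Function.update ω i (!ω i)) := by
    intro ω; funext j
    rcases eq_or_ne j i with rfl | hj
    · simp
    · simp [Function.update_of_ne hj]
  rw [← Equiv.sum_comp hinv.toPerm
    (fun ω => if ∀ j ∉ S', ω j = Function.update σ i false j then
        (∏ j ∈ S', if ω j then p else 1 - p) * f ω else 0)]
  refine Finset.sum_le_sum fun ω _ => ?_
  simp only [Function.Involutive.coe_toPerm]
  rcases Bool.eq_false_or_eq_true (ω i) with hb | hb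
  case inr =>
    -- ω i = false : both sides vanish
    have h1 : ¬ ∀ j ∉ S', ω j = Function.update σ i true j := fun h => by
      have := h i hi
      rw [Function.update_self, hb] at this
      exact Bool.noConfusion this
    have h2 : ¬ ∀ j ∉ S', Function.update ω i (!ω i) j = Function.update σ i false j := fun h => by
      have := h i hi
      rw [Function.update_self, Function.update_self, hb] at this
      simp at this
    rw [if_neg h1]; exact le_of_eq (if_neg h2)
  case inl =>
    have hWeq : (∏ j ∈ S', if (Function.update ω i (!ω i)) j then p else 1 - p)
        = ∏ j ∈ S', if ω j then p else 1 - p :=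
      Finset.prod_congr rfl (fun j hj => by
        rw [Function.update_of_ne (ne_of_mem_of_not_mem hj hi)])
    have hPiff : (∀ j ∉ S', (Function.update ω i (!ω i)) j = Function.update σ i false j)
        ↔ (∀ j ∉ S', ω j = Function.update σ i true j) := by
      constructor
      · intro h j hj
        rcases eq_or_ne j i with rfl | hji
        · rw [Function.update_self]; exact hb
        · have := h j hj
          rw [Function.update_of_ne hji, Function.update_of_ne hji] at this
          rwa [Function.update_of_ne hji]
      · intro h j hj
        rcases eq_or_ne j i with rfl | hji
        · rw [Function.update_self, Function.update_self, hb]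
          simp
        · have := h j hj
          rw [Function.update_of_ne hji] at this
          rw [Function.update_of_ne hji, Function.update_of_ne hji]
          exact this
    simp only [hWeq, hPiff]
    by_cases hP : ∀ j ∉ S', ω j = Function.update σ i true j
    · rw [if_pos hP, if_pos hP]
      refine (congrArg (fun x => x * f (Function.update ω i (!ω i))) hWeq).trans_le ?_
      refine mul_le_mul_of_nonneg_left (hf ?_) (Finset.prod_nonneg fun j _ => by
        split_ifs <;> linarith)
      refine Pi.le_def.mpr fun j => ?_
      rcases eq_or_ne j i with rfl | hji
      · rw [Function.update_self, hb]
        simp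
      · rw [Function.update_of_ne hji]
    · rw [if_neg hP, if_neg hP]

end Aux

open Classical in
theorem lss_key {V : Type*} [Fintype V] [DecidableEq V] (E : V → V → Prop)
    (hacyclic : ∀ i : V, ¬ Relation.TransGen E i i)
    (η p : ℝ) (hp0 : 0 ≤ p) (hp1 : p ≤ 1) (hpη : p ≤ η)
    (μ : (V → Bool) → ℝ) (hpos : ∀ ω, 0 ≤ μ ω) (hμ : MemW E η μ)
    (f : (V → Bool) → ℝ) (hf : Monotone f)
    (S : Finset V) :
    (∀ a ∈ S, ∀ j, E a j → j ∈ S) → ∀ σ : V → Bool,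
      (∑ ω, if ∀ j ∉ S, ω j = σ j then μ ω else 0) *
        (∑ ω, if ∀ j ∉ S, ω j = σ j then (∏ j ∈ S, if ω j then p else 1 - p) * f ω else 0)
      ≤ ∑ ω, if ∀ j ∉ S, ω j = σ j then μ ω * f ω else 0 := by
  induction S using Finset.strongInduction with
  | _ S ih =>
    intro hup σ
    rcases S.eq_empty_or_nonempty with rfl | hne
    · -- base case S = ∅
      have hbase : ∀ (g : (V → Bool) → ℝ),
          (∑ ω, if ∀ j ∉ (∅ : Finset V), ω j = σ j then g ω else 0) = g σ := by
        intro g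
        rw [Finset.sum_eq_single σ]
        · rw [if_pos (fun j _ => rfl)]
        · intro ω _ hω
          rw [if_neg]
          intro h
          exact hω (funext fun j => h j (Finset.notMem_empty j))
        · intro h; exact absurd (Finset.mem_univ σ) h
      rw [hbase, hbase, hbase]
      simp
    · -- find a source i of S
      obtain ⟨i, hiS, hmin⟩ := Finset.exists_min_image S
        (fun a => (S.filter (fun k => Relation.TransGen E k a)).card) hne
      have hsrc : ∀ j ∈ S, ¬ E j i := by
        intro j hjS hEji
        have hsub : S.filter (fun k => Relation.TransGen E k j)
            ⊆ S.filter (fun k => Relation.TransGen E k i) := by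
          intro k hk
          rw [Finset.mem_filter] at hk ⊢
          exact ⟨hk.1, hk.2.tail hEji⟩
        have hji : j ∈ S.filter (fun k => Relation.TransGen E k i) :=
          Finset.mem_filter.2 ⟨hjS, Relation.TransGen.single hEji⟩
        have hjnot : j ∉ S.filter (fun k => Relation.TransGen E k j) :=
          fun h => hacyclic j (Finset.mem_filter.1 h).2
        have hlt : (S.filter (fun k => Relation.TransGen E k j)).card
            < (S.filter (fun k => Relation.TransGen E k i)).card :=
          Finset.card_lt_card ⟨hsub, fun hc => hjnot (hc hji)⟩
        exact absurd (hmin j hjS) (not_le.2 hlt)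
      have hiS' : i ∉ S.erase i := Finset.notMem_erase i S
      have hup' : ∀ a ∈ S.erase i, ∀ j, E a j → j ∈ S.erase i := by
        intro a ha j hEaj
        have haS : a ∈ S := Finset.mem_of_mem_erase ha
        refine Finset.mem_erase.2 ⟨?_, hup a haS j hEaj⟩
        rintro rfl
        exact hsrc a haS hEaj
      rw [split_sum S i hiS σ μ, split_sum S i hiS σ (fun ω => μ ω * f ω), split_sumF S i hiS σ p f]
      have ih1 := ih (S.erase i) (Finset.erase_ssubset hiS) hup' (Function.update σ i true)
      have ih0 := ih (S.erase i) (Finset.erase_ssubset hiS) hup' (Function.update σ i false)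
      -- names for the six sums
      set A1 := ∑ ω, if ∀ j ∉ S.erase i, ω j = Function.update σ i true j then μ ω else 0 with hA1def
      set A0 := ∑ ω, if ∀ j ∉ S.erase i, ω j = Function.update σ i false j then μ ω else 0 with hA0def
      set F1 := ∑ ω, if ∀ j ∉ S.erase i, ω j = Function.update σ i true j then
          (∏ j ∈ S.erase i, if ω j then p else 1 - p) * f ω else 0 with hF1def
      set F0 := ∑ ω, if ∀ j ∉ S.erase i, ω j = Function.update σ i false j then
          (∏ j ∈ S.erase i, if ω j then p else 1 - p) * f ω else 0 with hF0def
      set B1 := ∑ ω, if ∀ j ∉ S.erase i, ω j = Function.update σ i true j then μ ω * f ω else 0 with hB1def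
      set B0 := ∑ ω, if ∀ j ∉ S.erase i, ω j = Function.update σ i false j then μ ω * f ω else 0 with hB0def
      -- now the goal is (A1 + A0) * (p * F1 + (1-p) * F0) ≤ B1 + B0
      have hA1nn : 0 ≤ A1 := by
        rw [hA1def]
        refine Finset.sum_nonneg fun ω _ => ?_
        split_ifs
        · exact hpos ω
        · exact le_rfl
      have hA0nn : 0 ≤ A0 := by
        rw [hA0def]
        refine Finset.sum_nonneg fun ω _ => ?_
        split_ifs
        · exact hpos ω
        · exact le_rfl
      have hF10 : F0 ≤ F1 := F_mono (S.erase i) i hiS' σ p hp0 hp1 f hf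
      rcases le_or_gt (A1 + A0) 0 with hA | hA
      · -- total conditional mass is zero
        have hA1z : A1 = 0 := le_antisymm (by linarith) hA1nn
        have hA0z : A0 = 0 := le_antisymm (by linarith) hA0nn
        have e1 : A1 * F1 = 0 := by rw [hA1z, zero_mul]
        have e0 : A0 * F0 = 0 := by rw [hA0z, zero_mul]
        rw [hA1z, hA0z]
        nlinarith [ih1, ih0, e1, e0]
      · -- positive mass: use the MemW condition at i
        set Y := Finset.univ.filter (fun j => j ∉ S ∧ σ j = true) with hY
        set Y' := Finset.univ.filter (fun j => j ∉ S ∧ σ j = false) with hY'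
        have hYiff : ∀ ω : V → Bool,
            ((∀ j ∈ Y, ω j = true) ∧ (∀ j ∈ Y', ω j = false)) ↔ (∀ j ∉ S, ω j = σ j) := by
          intro ω
          constructor
          · rintro ⟨h1, h0⟩ j hjS
            rcases Bool.eq_false_or_eq_true (σ j) with hσ | hσ
            · rw [hσ]
              exact h1 j (Finset.mem_filter.2 ⟨Finset.mem_univ j, hjS, hσ⟩)
            · rw [hσ]
              exact h0 j (Finset.mem_filter.2 ⟨Finset.mem_univ j, hjS, hσ⟩)
          · intro h
            constructor <;> intro j hj <;> rw [Finset.mem_filter] at hj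
            · rw [h j hj.2.1]; exact hj.2.2
            · rw [h j hj.2.1]; exact hj.2.2
        have hPrA : Pr μ (fun ω => (∀ j ∈ Y, ω j = true) ∧ (∀ j ∈ Y', ω j = false)) = A1 + A0 := by
          rw [← split_sum S i hiS σ μ]
          unfold Pr
          refine Finset.sum_congr rfl fun ω _ => ?_
          by_cases h : ∀ j ∉ S, ω j = σ j
          · rw [if_pos h, if_pos ((hYiff ω).2 h)]
          · rw [if_neg h, if_neg (fun hc => h ((hYiff ω).1 hc))]
        have hPrA1 : Pr μ (fun ω => ω i = true ∧ (∀ j ∈ Y, ω j = true) ∧ (∀ j ∈ Y', ω j = false))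
            = A1 := by
          rw [hA1def]
          unfold Pr
          refine Finset.sum_congr rfl fun ω _ => ?_
          have hiff : (ω i = true ∧ (∀ j ∈ Y, ω j = true) ∧ (∀ j ∈ Y', ω j = false))
              ↔ (∀ j ∉ S.erase i, ω j = Function.update σ i true j) :=
            (and_congr_right fun _ => hYiff ω).trans (cond_erase S i hiS σ ω true).symm
          by_cases h : ∀ j ∉ S.erase i, ω j = Function.update σ i true j
          · rw [if_pos h, if_pos (hiff.2 h)]
          · rw [if_neg h, if_neg (fun hc => h (hiff.1 hc))]
        have hdisj : Disjoint Y Y' := by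
          rw [Finset.disjoint_left]
          intro j hj hj'
          rw [Finset.mem_filter] at hj hj'
          rw [hj.2.2] at hj'
          exact Bool.noConfusion hj'.2.2
        have hYc : ∀ j ∈ Y, j ≠ i ∧ ¬ E i j := by
          intro j hj
          rw [Finset.mem_filter] at hj
          exact ⟨fun e => hj.2.1 (e ▸ hiS), fun hE => hj.2.1 (hup i hiS j hE)⟩
        have hYc' : ∀ j ∈ Y', j ≠ i ∧ ¬ E i j := by
          intro j hj
          rw [Finset.mem_filter] at hj
          exact ⟨fun e => hj.2.1 (e ▸ hiS), fun hE => hj.2.1 (hup i hiS j hE)⟩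
        have hstep := hμ i Y Y' hdisj hYc hYc' (by rw [hPrA]; exact hA)
        rw [hPrA, hPrA1] at hstep
        -- hstep : η * (A1 + A0) ≤ A1
        have hpA : p * (A1 + A0) ≤ A1 :=
          le_trans (mul_le_mul_of_nonneg_right hpη (by linarith)) hstep
        nlinarith [mul_nonneg (sub_nonneg.2 hpA) (sub_nonneg.2 hF10)]

/-- Directed-graph analogue of the Liggett–Schonmann–Stacey theorem: if every
vertex of the finite acyclic digraph `G` has out-degree at most `Δ ≥ 1` and
`μ ∈ W_η^G` with `ε = 1 − η ≤ Δ^Δ/(Δ+1)^{Δ+1}`, then `μ` stochastically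
dominates the product Bernoulli measure `π_ρ` with
`ρ = (1 − ε^{1/(Δ+1)}/Δ^{Δ/(Δ+1)})(1 − (εΔ)^{1/(Δ+1)})`. -/
theorem lss_directed {V : Type*} [Fintype V] [DecidableEq V]
    (E : V → V → Prop) [DecidableRel E]
    (hacyclic : ∀ i : V, ¬ Relation.TransGen E i i)
    (Δ : ℕ) (hΔ : 1 ≤ Δ)
    (hdeg : ∀ i : V, (Finset.univ.filter (fun j => E i j)).card ≤ Δ)
    (η ε : ℝ) (hε : ε = 1 - η)
    (hεbound : ε ≤ (Δ : ℝ) ^ Δ / ((Δ : ℝ) + 1) ^ (Δ + 1))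
    (μ : (V → Bool) → ℝ) (hpos : ∀ ω, 0 ≤ μ ω) (hsum : ∑ ω, μ ω = 1)
    (hμ : MemW E η μ)
    (f : (V → Bool) → ℝ) (hf : Monotone f) :
    ∑ ω, bernoulliProd ((1 - ε ^ ((1 : ℝ) / (Δ + 1)) / (Δ : ℝ) ^ ((Δ : ℝ) / (Δ + 1))) *
        (1 - (ε * Δ) ^ ((1 : ℝ) / (Δ + 1)))) ω * f ω ≤
      ∑ ω, μ ω * f ω := by
  rcases isEmpty_or_nonempty V with hV | hV
  · -- the empty graph: both sides are equal
    have huniq : (Finset.univ : Finset (V → Bool)) = {fun _ => false} := by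
      refine Finset.eq_singleton_iff_unique_mem.2 ⟨Finset.mem_univ _, fun x _ => ?_⟩
      funext j
      exact isEmptyElim j
    rw [huniq, Finset.sum_singleton] at hsum
    rw [huniq, Finset.sum_singleton, Finset.sum_singleton, hsum, one_mul]
    have hb : bernoulliProd ((1 - ε ^ ((1 : ℝ) / (Δ + 1)) / (Δ : ℝ) ^ ((Δ : ℝ) / (Δ + 1))) *
        (1 - (ε * Δ) ^ ((1 : ℝ) / (Δ + 1)))) (fun _ => false : V → Bool) = 1 := by
      simp [bernoulliProd]
    rw [hb, one_mul]
  · -- nonempty graph: first derive `0 ≤ ε`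
    obtain ⟨i0⟩ := hV
    have htriv : Pr μ (fun ω => (∀ j ∈ (∅ : Finset V), ω j = true) ∧
        (∀ j ∈ (∅ : Finset V), ω j = false)) = 1 := by
      rw [← hsum]
      unfold Pr
      refine Finset.sum_congr rfl fun ω _ => if_pos
        ⟨fun j hj => absurd hj (Finset.notMem_empty j),
         fun j hj => absurd hj (Finset.notMem_empty j)⟩
    have h2 := hμ i0 ∅ ∅ (Finset.disjoint_empty_left ∅)
      (fun j hj => absurd hj (Finset.notMem_empty j))
      (fun j hj => absurd hj (Finset.notMem_empty j))
      (by rw [htriv]; norm_num)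
    rw [htriv, mul_one] at h2
    have hη1 : η ≤ 1 := le_trans h2 (Pr_le_one μ hpos hsum _)
    have hε0 : 0 ≤ ε := by rw [hε]; linarith
    -- numeric facts
    have hkpos : (0:ℝ) < (Δ:ℝ) := by exact_mod_cast Nat.lt_of_lt_of_le Nat.zero_lt_one hΔ
    have hk1 : (1:ℝ) ≤ (Δ:ℝ) := by exact_mod_cast hΔ
    have hkk : (0:ℝ) < (Δ:ℝ)^Δ := pow_pos hkpos Δ
    have ht : (0:ℝ) < 1/((Δ:ℝ)+1) := by positivity
    have h5 : ε * (Δ:ℝ) ≤ (Δ:ℝ)^(Δ+1)/(((Δ:ℝ)+1)^(Δ+1)) := by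
      calc ε * (Δ:ℝ) ≤ ((Δ:ℝ)^Δ/((Δ:ℝ)+1)^(Δ+1)) * (Δ:ℝ) :=
            mul_le_mul_of_nonneg_right hεbound hkpos.le
        _ = (Δ:ℝ)^(Δ+1)/(((Δ:ℝ)+1)^(Δ+1)) := by rw [div_mul_eq_mul_div, ← pow_succ]
    have hεk : ε * (Δ:ℝ) ≤ 1 := by
      refine le_trans h5 ((div_le_one (by positivity)).2 ?_)
      exact pow_le_pow_left₀ hkpos.le (by linarith) _
    have hpowden : ((Δ:ℝ)^Δ) ^ ((1:ℝ)/((Δ:ℝ)+1)) = (Δ:ℝ) ^ ((Δ:ℝ)/((Δ:ℝ)+1)) := by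
      rw [← Real.rpow_natCast (Δ:ℝ) Δ, ← Real.rpow_mul hkpos.le, mul_one_div]
    have hβ0 : 0 ≤ (ε * (Δ:ℝ)) ^ ((1:ℝ)/((Δ:ℝ)+1)) :=
      Real.rpow_nonneg (mul_nonneg hε0 hkpos.le) _
    have hβ1 : (ε * (Δ:ℝ)) ^ ((1:ℝ)/((Δ:ℝ)+1)) ≤ 1 :=
      Real.rpow_le_one (mul_nonneg hε0 hkpos.le) hεk ht.le
    have hα0 : 0 ≤ ε ^ ((1:ℝ)/((Δ:ℝ)+1)) / (Δ:ℝ) ^ ((Δ:ℝ)/((Δ:ℝ)+1)) :=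
      div_nonneg (Real.rpow_nonneg hε0 _) (Real.rpow_nonneg hkpos.le _)
    have hα1 : ε ^ ((1:ℝ)/((Δ:ℝ)+1)) / (Δ:ℝ) ^ ((Δ:ℝ)/((Δ:ℝ)+1)) ≤ 1 := by
      rw [div_le_one (Real.rpow_pos_of_pos hkpos _), ← hpowden]
      refine Real.rpow_le_rpow hε0 ?_ ht.le
      refine le_trans hεbound (div_le_self hkk.le ?_)
      exact one_le_pow₀ (by linarith)
    have hεα : ε ≤ ε ^ ((1:ℝ)/((Δ:ℝ)+1)) / (Δ:ℝ) ^ ((Δ:ℝ)/((Δ:ℝ)+1)) := by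
      have hαeq : ε ^ ((1:ℝ)/((Δ:ℝ)+1)) / (Δ:ℝ) ^ ((Δ:ℝ)/((Δ:ℝ)+1))
          = (ε / (Δ:ℝ)^Δ) ^ ((1:ℝ)/((Δ:ℝ)+1)) := by
        rw [Real.div_rpow hε0 hkk.le, hpowden]
      rw [hαeq, one_div,
        Real.le_rpow_inv_iff_of_pos hε0 (div_nonneg hε0 hkk.le) (by positivity),
        show ((Δ:ℝ)+1) = ((Δ+1 : ℕ):ℝ) by push_cast; ring, Real.rpow_natCast,
        le_div_iff₀ hkk]
      calc ε ^ (Δ+1) * (Δ:ℝ)^Δ = ε * (ε * (Δ:ℝ))^Δ := by rw [mul_pow, pow_succ]; ring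
        _ ≤ ε * 1 := mul_le_mul_of_nonneg_left
              (pow_le_one₀ (mul_nonneg hε0 hkpos.le) hεk) hε0
        _ = ε := mul_one ε
    set ρ := (1 - ε ^ ((1 : ℝ) / ((Δ:ℝ) + 1)) / (Δ : ℝ) ^ ((Δ : ℝ) / ((Δ:ℝ) + 1))) *
        (1 - (ε * (Δ:ℝ)) ^ ((1 : ℝ) / ((Δ:ℝ) + 1))) with hρ
    have hρ0 : 0 ≤ ρ := mul_nonneg (by linarith) (by linarith)
    have hρ1 : ρ ≤ 1 := mul_le_one₀ (by linarith) (by linarith) (by linarith)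
    have hρη : ρ ≤ η := by nlinarith [mul_nonneg hβ0 (sub_nonneg.2 hα1)]
    have key := lss_key E hacyclic η ρ hρ0 hρ1 hρη μ hpos hμ f hf Finset.univ
      (fun a _ j _ => Finset.mem_univ j) (fun _ => false)
    have hcond : ∀ ω : V → Bool, ∀ j ∉ (Finset.univ : Finset V),
        ω j = (fun _ => false : V → Bool) j :=
      fun ω j hj => absurd (Finset.mem_univ j) hj
    have eA : (∑ ω, if ∀ j ∉ (Finset.univ : Finset V),
        ω j = (fun _ => false : V → Bool) j then μ ω else 0) = ∑ ω, μ ω :=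
      Finset.sum_congr rfl fun ω _ => if_pos (hcond ω)
    have eF : (∑ ω, if ∀ j ∉ (Finset.univ : Finset V),
          ω j = (fun _ => false : V → Bool) j then
          (∏ j ∈ Finset.univ, if ω j then ρ else 1 - ρ) * f ω else 0)
        = ∑ ω, bernoulliProd ρ ω * f ω :=
      Finset.sum_congr rfl fun ω _ => by rw [if_pos (hcond ω)]; rfl
    have eB : (∑ ω, if ∀ j ∉ (Finset.univ : Finset V),
          ω j = (fun _ => false : V → Bool) j then μ ω * f ω else 0)
        = ∑ ω, μ ω * f ω :=
      Finset.sum_congr rfl fun ω _ => if_pos (hcond ω)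
    rw [eA, hsum, one_mul, eF, eB] at key
    exact key
end
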